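/- Let g : ℝⁿ → ℝⁿ be twice continuously differentiable, and for each pair of indices i, j let Δ_{ij}(x) be the (i,j) cofactor of the Jacobian matrix of g at x, i.e. Δ_{ij} = (−1)^{i+j} times the determinant of the (n−1)×(n−1) matrix obtained from the matrix (∂g_a/∂x_b)_{a,b=1..n} by deleting row i and column j. Then for every index i and every point x ∈ ℝⁿ, ∑_{j=1}^{n} ∂Δ_{ij}/∂x_j (x) = 0. -/

import Mathlib

noncomputable section

open scoped BigOperators

/-- Partial derivative of `f` in the `i`-th coordinate direction at `x`. -/
def pd {n : ℕ} (i : Fin n) (f : (Fin n → ℝ) → ℝ) (x : Fin n → ℝ) : ℝ :=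
  fderiv ℝ f x (Pi.single i 1)

/-- Jacobian matrix of `g : ℝⁿ → ℝⁿ` at `x`: entries `(∂g_a/∂x_b)(x)`. -/
def jacobianMatrix {n : ℕ} (g : (Fin n → ℝ) → (Fin n → ℝ)) (x : Fin n → ℝ) :
    Matrix (Fin n) (Fin n) ℝ :=
  Matrix.of fun a b => pd b (fun y => g y a) x

/-- The `(i,j)` cofactor of the Jacobian matrix of `g` at `x`: `(-1)^(i+j)` times the
determinant of the matrix obtained by deleting row `i` and column `j`. -/
def jacCofactor {n : ℕ} (g : (Fin (n + 1) → ℝ) → (Fin (n + 1) → ℝ))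
    (i j : Fin (n + 1)) (x : Fin (n + 1) → ℝ) : ℝ :=
  (-1 : ℝ) ^ ((i : ℕ) + (j : ℕ)) *
    (Matrix.of fun a b : Fin n =>
      jacobianMatrix g x (i.succAbove a) (j.succAbove b)).det

open Finset

private lemma m_contDiff {N : ℕ} {f : (Fin N → ℝ) → ℝ} (hf : ContDiff ℝ 2 f) (b : Fin N) :
    ContDiff ℝ 1 (fun y => fderiv ℝ f y (Pi.single b 1)) := by
  have h1 : ContDiff ℝ 1 (fderiv ℝ f) := hf.fderiv_right (by norm_num)
  exact h1.clm_apply contDiff_const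

private lemma fderiv_apply_const {N : ℕ} {f : (Fin N → ℝ) → ℝ} (hf : ContDiff ℝ 2 f)
    (v w : Fin N → ℝ) (x : Fin N → ℝ) :
    fderiv ℝ (fun y => fderiv ℝ f y v) x w = fderiv ℝ (fderiv ℝ f) x w v := by
  have hd : DifferentiableAt ℝ (fderiv ℝ f) x :=
    ((hf.fderiv_right (by norm_num : (1:WithTop ℕ∞) + 1 ≤ 2)).differentiable (by norm_num)) x
  rw [fderiv_clm_apply hd (differentiableAt_const v)]
  simp

private lemma pd_symm {N : ℕ} {f : (Fin N → ℝ) → ℝ} (hf : ContDiff ℝ 2 f) (b c : Fin N)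
    (x : Fin N → ℝ) :
    pd c (fun y => fderiv ℝ f y (Pi.single b 1)) x
      = pd b (fun y => fderiv ℝ f y (Pi.single c 1)) x := by
  rw [pd, pd, fderiv_apply_const hf, fderiv_apply_const hf]
  exact (hf.contDiffAt.isSymmSndFDerivAt (by norm_num)) _ _


/-- entry functions of the Jacobian -/
private def Em {n : ℕ} (g : (Fin (n+1) → ℝ) → (Fin (n+1) → ℝ)) (a b : Fin (n+1)) :
    (Fin (n+1) → ℝ) → ℝ := fun y => fderiv ℝ (fun z => g z a) y (Pi.single b 1)

/-- entries of the Jacobian with row `i` replaced by `Pi.single j 1` -/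
private def Ee {n : ℕ} (g : (Fin (n+1) → ℝ) → (Fin (n+1) → ℝ)) (i j a b : Fin (n+1)) :
    (Fin (n+1) → ℝ) → ℝ :=
  fun y => if a = i then (Pi.single j 1 : Fin (n+1) → ℝ) b else Em g a b y

/-- derivative of `Ee` -/
private def Ee' {n : ℕ} (g : (Fin (n+1) → ℝ) → (Fin (n+1) → ℝ)) (i a b : Fin (n+1))
    (x : Fin (n+1) → ℝ) : (Fin (n+1) → ℝ) →L[ℝ] ℝ :=
  if a = i then 0 else fderiv ℝ (Em g a b) x

/-- the summand in the triple sum -/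
private def Tm {n : ℕ} (g : (Fin (n+1) → ℝ) → (Fin (n+1) → ℝ)) (i : Fin (n+1))
    (x : Fin (n+1) → ℝ) (t : Fin (n+1) × Equiv.Perm (Fin (n+1)) × Fin (n+1)) : ℝ :=
  ((Equiv.Perm.sign t.2.1 : ℤ) : ℝ) *
    ((∏ b ∈ Finset.univ.erase t.2.2, Ee g i t.1 (t.2.1 b) b x) *
      (Ee' g i (t.2.1 t.2.2) t.2.2 x (Pi.single t.1 1)))

private def invo {n : ℕ} (t : Fin (n+1) × Equiv.Perm (Fin (n+1)) × Fin (n+1)) :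
    Fin (n+1) × Equiv.Perm (Fin (n+1)) × Fin (n+1) :=
  (t.2.2, t.2.1 * Equiv.swap t.1 t.2.2, t.1)

private lemma invo_invo {n : ℕ} (t : Fin (n+1) × Equiv.Perm (Fin (n+1)) × Fin (n+1)) :
    invo (invo t) = t := by
  obtain ⟨j, π, c⟩ := t
  simp only [invo]
  rw [Equiv.swap_comm c j, mul_assoc, Equiv.swap_mul_self, mul_one]

private lemma cof_expand {n : ℕ} (g : (Fin (n + 1) → ℝ) → (Fin (n + 1) → ℝ))
    (i j : Fin (n + 1)) (y : Fin (n + 1) → ℝ) :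
    jacCofactor g i j y =
      ∑ π : Equiv.Perm (Fin (n+1)), ((Equiv.Perm.sign π : ℤ) : ℝ) * ∏ b, Ee g i j (π b) b y := by
  have h1 : (Matrix.of fun a b => Ee g i j a b y)
      = (jacobianMatrix g y).updateRow i (Pi.single j 1) := by
    ext a b
    by_cases h : a = i <;>
      simp [Ee, h, Matrix.updateRow_apply, jacobianMatrix, pd, Em]
  have h2 : jacCofactor g i j y = ((jacobianMatrix g y).updateRow i (Pi.single j 1)).det := by
    rw [Matrix.det_succ_row _ i]
    simp only [Matrix.updateRow_self, Matrix.submatrix_updateRow_succAbove]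
    rw [Finset.sum_eq_single j]
    · simp [jacCofactor, Matrix.submatrix]
    · intro b _ hbj
      simp [Pi.single_apply, hbj]
    · simp
  rw [h2, ← h1, Matrix.det_apply]
  simp [Units.smul_def, zsmul_eq_mul]

private lemma pd_expand {n : ℕ} (g : (Fin (n + 1) → ℝ) → (Fin (n + 1) → ℝ))
    (hg : ContDiff ℝ 2 g) (i j : Fin (n + 1)) (x : Fin (n + 1) → ℝ) :
    pd j (fun y => jacCofactor g i j y) x =
      ∑ π : Equiv.Perm (Fin (n+1)), ∑ c, Tm g i x (j, π, c) := by
  have hcof : ∀ y, jacCofactor g i j y =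
      ∑ π : Equiv.Perm (Fin (n+1)), ((Equiv.Perm.sign π : ℤ) : ℝ) * ∏ b, Ee g i j (π b) b y :=
    fun y => cof_expand g i j y
  have hfa : ∀ a, ContDiff ℝ 2 (fun y => g y a) := fun a =>
    (ContinuousLinearMap.proj a : ((Fin (n+1)) → ℝ) →L[ℝ] ℝ).contDiff.comp hg
  have hE : ∀ a b, HasFDerivAt (fun y => Ee g i j a b y) (Ee' g i a b x) x := by
    intro a b
    by_cases h : a = i
    · simpa [Ee, Ee', h] using (hasFDerivAt_const ((Pi.single j 1 : Fin (n+1) → ℝ) b) x : HasFDerivAt _ (0 : (Fin (n+1) → ℝ) →L[ℝ] ℝ) x)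
    · simp only [Ee, Ee', if_neg h]
      exact
        (((m_contDiff (hfa a) b).differentiable (by norm_num)) x).hasFDerivAt
  have hsum : HasFDerivAt (fun y => jacCofactor g i j y)
      (∑ π : Equiv.Perm (Fin (n+1)), ((Equiv.Perm.sign π : ℤ) : ℝ) •
        ∑ c, (∏ b ∈ Finset.univ.erase c, Ee g i j (π b) b x) • Ee' g i (π c) c x) x := by
    rw [funext hcof]
    exact HasFDerivAt.fun_sum fun π _ =>
      (HasFDerivAt.finset_prod (fun b _ => hE (π b) b)).const_mul _
  rw [pd, hsum.fderiv]
  simp only [ContinuousLinearMap.sum_apply, ContinuousLinearMap.smul_apply, smul_eq_mul,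
    Finset.mul_sum, Tm]

private lemma Tm_diag {n : ℕ} (g : (Fin (n + 1) → ℝ) → (Fin (n + 1) → ℝ)) (i : Fin (n+1))
    (x : Fin (n+1) → ℝ) (j : Fin (n+1)) (π : Equiv.Perm (Fin (n+1))) :
    Tm g i x (j, π, j) = 0 := by
  by_cases hπj : π j = i
  · simp [Tm, Ee', hπj]
  · have hb : π (π⁻¹ i) = i := by simp
    have hb₀j : π⁻¹ i ≠ j := fun h => hπj (h ▸ hb)
    have h0 : (∏ b ∈ Finset.univ.erase j, Ee g i j (π b) b x) = 0 := by
      refine Finset.prod_eq_zero (Finset.mem_erase.mpr ⟨hb₀j, Finset.mem_univ _⟩) ?_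
      simp [Ee, hb, Pi.single_apply, hb₀j]
      exact hb₀j
    simp [Tm, h0]

private lemma Tm_invo {n : ℕ} (g : (Fin (n + 1) → ℝ) → (Fin (n + 1) → ℝ))
    (hg : ContDiff ℝ 2 g) (i : Fin (n+1)) (x : Fin (n+1) → ℝ)
    (t : Fin (n+1) × Equiv.Perm (Fin (n+1)) × Fin (n+1)) :
    Tm g i x t + Tm g i x (invo t) = 0 := by
  obtain ⟨j, π, c⟩ := t
  by_cases hjc : j = c
  · subst hjc
    have h1 : Equiv.swap j j = (1 : Equiv.Perm (Fin (n+1))) := by rw [Equiv.swap_self]; rfl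
    have h2 : invo (j, π, j) = (j, π, j) := by simp [invo, h1]; rfl
    rw [h2, Tm_diag, add_zero]
  · have hinvo : invo (j, π, c) = (c, π * Equiv.swap j c, j) := rfl
    by_cases hπc : π c = i
    · have d1 : Ee' g i (π c) c x = 0 := by simp [Ee', hπc]
      have d2 : Ee' g i ((π * Equiv.swap j c) j) j x = 0 := by
        simp [Ee', Equiv.Perm.mul_apply, Equiv.swap_apply_left, hπc]
      rw [hinvo]
      simp [Tm, d1, d2, Ee', hπc, Equiv.Perm.mul_apply]
    · by_cases hπj : π j = i
      · -- genuine cancellation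
        have hsign : ((Equiv.Perm.sign (π * Equiv.swap j c) : ℤ) : ℝ)
            = -((Equiv.Perm.sign π : ℤ) : ℝ) := by
          simp [Equiv.Perm.sign_mul, Equiv.Perm.sign_swap hjc]
        have hD : Ee' g i ((π * Equiv.swap j c) j) j x (Pi.single c 1)
            = Ee' g i (π c) c x (Pi.single j 1) := by
          rw [Equiv.Perm.mul_apply, Equiv.swap_apply_left]
          rw [Ee', Ee', if_neg hπc, if_neg hπc]
          have hfa : ContDiff ℝ 2 (fun y => g y (π c)) :=
            (ContinuousLinearMap.proj (π c) : ((Fin (n+1)) → ℝ) →L[ℝ] ℝ).contDiff.comp hg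
          exact pd_symm hfa j c x
        have hP : (∏ b ∈ Finset.univ.erase j, Ee g i c ((π * Equiv.swap j c) b) b x)
            = ∏ b ∈ Finset.univ.erase c, Ee g i j (π b) b x := by
          have hjm : j ∈ Finset.univ.erase c := Finset.mem_erase.mpr ⟨hjc, Finset.mem_univ _⟩
          have hcm : c ∈ Finset.univ.erase j :=
            Finset.mem_erase.mpr ⟨Ne.symm hjc, Finset.mem_univ _⟩
          rw [← Finset.mul_prod_erase _ _ hcm, ← Finset.mul_prod_erase _ _ hjm]
          have e1 : Ee g i c ((π * Equiv.swap j c) c) c x = 1 := by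
            simp [Ee, Equiv.Perm.mul_apply, Equiv.swap_apply_right, hπj]
          have e2 : Ee g i j (π j) j x = 1 := by simp [Ee, hπj]
          rw [e1, e2, one_mul, one_mul, Finset.erase_right_comm]
          refine Finset.prod_congr rfl fun b hb => ?_
          rcases Finset.mem_erase.mp hb with ⟨hbj, hb2⟩
          rcases Finset.mem_erase.mp (Finset.mem_erase.mp hb).2 with ⟨hbc, -⟩
          have hswap : Equiv.swap j c b = b := Equiv.swap_apply_of_ne_of_ne hbj hbc
          have hπb : π b ≠ i := fun h =>
            hbj (π.injective (h.trans hπj.symm))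
          simp [Ee, Equiv.Perm.mul_apply, hswap, hπb]
        rw [hinvo, Tm, Tm]
        simp only
        rw [hsign, hD, hP]
        ring
      · -- both products vanish
        have hb : π (π⁻¹ i) = i := by simp
        have hb₀j : π⁻¹ i ≠ j := fun h => hπj (h ▸ hb)
        have hb₀c : π⁻¹ i ≠ c := fun h => hπc (h ▸ hb)
        have hP1 : (∏ b ∈ Finset.univ.erase c, Ee g i j (π b) b x) = 0 := by
          refine Finset.prod_eq_zero (Finset.mem_erase.mpr ⟨hb₀c, Finset.mem_univ _⟩) ?_
          simp [Ee, hb, Pi.single_apply, hb₀j]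
          exact hb₀j
        have hP2 : (∏ b ∈ Finset.univ.erase j, Ee g i c (π (Equiv.swap j c b)) b x) = 0 := by
          refine Finset.prod_eq_zero (Finset.mem_erase.mpr ⟨hb₀j, Finset.mem_univ _⟩) ?_
          have hswap : Equiv.swap j c (π⁻¹ i) = π⁻¹ i :=
            Equiv.swap_apply_of_ne_of_ne hb₀j hb₀c
          simp [Ee, Equiv.Perm.mul_apply, hswap, hb, Pi.single_apply, hb₀c]
          rw [show (Equiv.symm π) i = π⁻¹ i from rfl, hswap, hb, if_pos rfl, if_neg hb₀c]
        rw [hinvo]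
        simp [Tm, Equiv.Perm.mul_apply, hP1, hP2]

/-- Jacobi's fundamental lemma (Piola identity): each row of cofactors of the
Jacobian matrix of a C² map is divergence-free. -/
theorem piola_identity {n : ℕ} (g : (Fin (n + 1) → ℝ) → (Fin (n + 1) → ℝ))
    (hg : ContDiff ℝ 2 g) (i : Fin (n + 1)) (x : Fin (n + 1) → ℝ) :
    ∑ j, pd j (fun y => jacCofactor g i j y) x = 0 := by
  classical
  have hne : ∀ t : Fin (n+1) × Equiv.Perm (Fin (n+1)) × Fin (n+1),
      Tm g i x t ≠ 0 → invo t ≠ t := by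
    rintro ⟨j, π, c⟩ hT heq
    have h1 : c = j := congrArg Prod.fst heq
    subst h1
    exact hT (Tm_diag g i x c π)
  calc ∑ j, pd j (fun y => jacCofactor g i j y) x
      = ∑ j, ∑ π : Equiv.Perm (Fin (n+1)), ∑ c, Tm g i x (j, π, c) :=
        Finset.sum_congr rfl fun j _ => pd_expand g hg i j x
    _ = ∑ t : Fin (n+1) × Equiv.Perm (Fin (n+1)) × Fin (n+1), Tm g i x t := by
        rw [Fintype.sum_prod_type]
        exact Finset.sum_congr rfl fun j _ =>
          (Fintype.sum_prod_type (fun p : Equiv.Perm (Fin (n+1)) × Fin (n+1) => Tm g i x (j, p))).symm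
    _ = 0 := Finset.sum_ninvolution invo (Tm_invo g hg i x) hne
        (fun t => Finset.mem_univ _) invo_invo
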